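/- Let E : H → ℝ be of the form E(u) = (1/2)‖Tu‖² − (1/p)G(u) with p > 2 and G(ku) = k^p G(u) for k > 0, ‖T(ku)‖² = k²‖Tu‖², and let Q(u) = (1/2)‖u‖²_{L²}, S_c = {u : Q(u) = c}, m(c) = inf_{S_c} E. If m(c) < 0 for all c > 0, then m(k²c) < k² m(c) for all k > 1 and c > 0. -/
import Mathlib


/-- abstract scaling lemma. E(u) = (1/2)‖Tu‖² − (1/p)G(u) with a
2-homogeneous quadratic part Tn and a p-homogeneous part G (p > 2),
Q(u) = (1/2)‖u‖², m(c) = inf over S_c of E. If m(c) < 0 for all c > 0, then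
m(k²c) < k²m(c) for all k > 1, c > 0. -/
theorem stmt11 {H : Type*} [NormedAddCommGroup H] [InnerProductSpace ℝ H]
    (Tn G : H → ℝ) (p : ℝ) (hp : 2 < p)
    (hT : ∀ k : ℝ, 0 < k → ∀ u, Tn (k • u) = k^2 * Tn u)
    (hTnonneg : ∀ u, 0 ≤ Tn u)
    (hG : ∀ k : ℝ, 0 < k → ∀ u, G (k • u) = k ^ p * G u)
    (E : H → ℝ) (hE : E = fun u => (1/2) * Tn u - (1/p) * G u)
    (m : ℝ → ℝ) (hm : m = fun c => sInf (E '' {u | (1/2) * ‖u‖^2 = c}))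
    (hne : ∀ c > (0:ℝ), {u : H | (1/2) * ‖u‖^2 = c}.Nonempty)
    (hneg : ∀ c > (0:ℝ), m c < 0) :
    ∀ k > (1:ℝ), ∀ c > (0:ℝ), m (k^2 * c) < k^2 * m c := by
  intro k hk c hc
  have hk0 : (0:ℝ) < k := by linarith
  have hkp2 : k^2 < k^p := by
    have h2 : (k:ℝ)^2 = k^(2:ℝ) := by
      rw [← Real.rpow_natCast k 2]; norm_num
    rw [h2]
    exact (Real.rpow_lt_rpow_left_iff hk).mpr hp
  have hkppos : (0:ℝ) < k^p := Real.rpow_pos_of_pos hk0 p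
  have hbdd : ∀ c' > (0:ℝ), BddBelow (E '' {u : H | (1/2) * ‖u‖^2 = c'}) := by
    intro c' hc'
    by_contra h
    have h0 := Real.sInf_of_not_bddBelow h
    have h1 := hneg c' hc'
    rw [hm] at h1
    simp only at h1
    linarith
  have hc2 : (0:ℝ) < k^2 * c := by positivity
  -- membership of scaled elements
  have hmem : ∀ u : H, (1/2) * ‖u‖^2 = c →
      E (k • u) ∈ E '' {u : H | (1/2) * ‖u‖^2 = k^2 * c} := by
    intro u hu
    refine ⟨k • u, ?_, rfl⟩
    simp only [Set.mem_setOf_eq, norm_smul, Real.norm_eq_abs, abs_of_pos hk0]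
    rw [mul_pow, ← hu]; ring
  -- key inequality
  have key : ∀ u : H, (1/2) * ‖u‖^2 = c → m (k^2 * c) ≤ k^p * E u := by
    intro u hu
    have h1 : m (k^2 * c) ≤ E (k • u) := by
      rw [hm]
      exact csInf_le (hbdd _ hc2) (hmem u hu)
    have h2 : E (k • u) ≤ k^p * E u := by
      rw [hE]
      simp only
      rw [hT k hk0 u, hG k hk0 u]
      have := mul_nonneg (sub_pos.mpr hkp2).le (hTnonneg u)
      nlinarith
    linarith
  have hlow : m (k^2 * c) / k^p ≤ m c := by
    have hmceq : m c = sInf (E '' {u : H | (1/2) * ‖u‖^2 = c}) := by rw [hm]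
    rw [hmceq]
    refine le_csInf ((hne c hc).image E) ?_
    rintro b ⟨u, hu, rfl⟩
    rw [div_le_iff₀ hkppos]
    calc m (k^2 * c) ≤ k^p * E u := key u hu
    _ = E u * k^p := mul_comm _ _
  have h3 : m (k^2 * c) ≤ k^p * m c := by
    rw [div_le_iff₀ hkppos] at hlow
    linarith [hlow]
  have hmc : m c < 0 := hneg c hc
  nlinarith [mul_lt_mul_of_neg_right hkp2 hmc]
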